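/- The p^x-th cyclotomic polynomial Φ_{p^x}(X) = X^{(p−1)p^{x−1}} + X^{(p−2)p^{x−1}} + ⋯ + X^{p^{x−1}} + 1 is irreducible over ℚ_p for every prime p and x ≥ 1. -/

import Mathlib

open Polynomial

theorem aux_eisenstein (p : ℕ) [hp : Fact p.Prime] (n : ℕ) :
    ((cyclotomic (p ^ (n + 1)) ℤ_[p]).comp (X + C 1)).IsEisensteinAt
      (Ideal.span {(p : ℤ_[p])}) := by
  have hZ := cyclotomic_prime_pow_comp_X_add_one_isEisensteinAt p n
  have hmap : ((cyclotomic (p ^ (n + 1)) ℤ).comp (X + C 1)).map (Int.castRingHom ℤ_[p])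
      = (cyclotomic (p ^ (n + 1)) ℤ_[p]).comp (X + C 1) := by
    rw [map_comp, map_cyclotomic]
    simp
  have hm : ((cyclotomic (p ^ (n + 1)) ℤ_[p]).comp (X + C 1)).Monic :=
    (cyclotomic.monic _ ℤ_[p]).comp_X_add_C 1
  constructor
  · rw [hm.leadingCoeff]
    intro h
    rw [Ideal.mem_span_singleton] at h
    exact PadicInt.prime_p.not_unit (isUnit_of_dvd_one h)
  · intro i hi
    have hdeg : ((cyclotomic (p ^ (n + 1)) ℤ_[p]).comp (X + C 1)).natDegree
        = ((cyclotomic (p ^ (n + 1)) ℤ).comp (X + C 1)).natDegree := by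
      have h1 : (X + C 1 : ℤ_[p][X]).natDegree = 1 := natDegree_X_add_C 1
      have h2 : (X + C 1 : ℤ[X]).natDegree = 1 := natDegree_X_add_C 1
      rw [natDegree_comp, natDegree_comp, natDegree_cyclotomic, natDegree_cyclotomic, h1, h2]
    have hmem : (p : ℤ) ∣ ((cyclotomic (p ^ (n + 1)) ℤ).comp (X + C 1)).coeff i := by
      have := hZ.mem (hdeg ▸ hi)
      simpa using Ideal.mem_span_singleton.mp this
    rw [← hmap, coeff_map, Ideal.mem_span_singleton]
    have : ((p : ℤ) : ℤ_[p]) ∣ (((cyclotomic (p ^ (n + 1)) ℤ).comp (X + C 1)).coeff i : ℤ_[p]) :=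
      map_dvd (Int.castRingHom ℤ_[p]) hmem
    simpa using this
  · rw [← hmap, coeff_map]
    have h0 : ((cyclotomic (p ^ (n + 1)) ℤ).comp (X + C 1)).coeff 0 = p := by
      rw [coeff_zero_eq_eval_zero]
      simp [eval_comp, eval_one_cyclotomic_prime_pow]
    rw [h0]
    rw [Ideal.span_singleton_pow, Ideal.mem_span_singleton]
    intro hdvd
    have hdvd' : (p : ℤ_[p]) * (p : ℤ_[p]) ∣ (p : ℤ_[p]) * 1 := by
      rw [mul_one, ← sq]
      simpa using hdvd
    have hne : (p : ℤ_[p]) ≠ 0 := PadicInt.prime_p.ne_zero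
    have : (p : ℤ_[p]) ∣ 1 := (mul_dvd_mul_iff_left hne).mp hdvd'
    exact PadicInt.prime_p.not_unit (isUnit_of_dvd_one this)

/-- The p^x-th cyclotomic polynomial is irreducible over ℚ_p for every prime p and x ≥ 1. -/
theorem stmt_6 (p x : ℕ) [Fact p.Prime] (hx : 1 ≤ x) :
    Irreducible (Polynomial.cyclotomic (p ^ x) ℚ_[p]) := by
  obtain ⟨n, rfl⟩ : ∃ n, x = n + 1 := ⟨x - 1, (Nat.succ_pred_eq_of_pos hx).symm⟩
  have key : Irreducible ((cyclotomic (p ^ (n + 1)) ℚ_[p]).comp (X + C 1)) := by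
    have hmap : ((cyclotomic (p ^ (n + 1)) ℤ_[p]).comp (X + C 1)).map
        (algebraMap ℤ_[p] ℚ_[p]) = (cyclotomic (p ^ (n + 1)) ℚ_[p]).comp (X + C 1) := by
      rw [map_comp, map_cyclotomic]
      simp
    rw [← hmap]
    have hm : ((cyclotomic (p ^ (n + 1)) ℤ_[p]).comp (X + C 1)).Monic :=
      (cyclotomic.monic _ ℤ_[p]).comp_X_add_C 1
    rw [← hm.irreducible_iff_irreducible_map_fraction_map]
    refine (aux_eisenstein p n).irreducible ?_ hm.isPrimitive ?_
    · rw [Ideal.span_singleton_prime PadicInt.prime_p.ne_zero]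
      exact PadicInt.prime_p
    · rw [natDegree_comp, natDegree_cyclotomic]
      have h1 : (X + C 1 : ℤ_[p][X]).natDegree = 1 := natDegree_X_add_C 1
      rw [h1, mul_one]
      exact Nat.totient_pos.2 (pow_pos (Fact.out (p := p.Prime)).pos _)
  have := (MulEquiv.irreducible_iff (algEquivAevalXAddC (1 : ℚ_[p])).toMulEquiv
    (x := cyclotomic (p ^ (n + 1)) ℚ_[p])).mp ?_
  · exact this
  · simpa [algEquivAevalXAddC, algEquivOfCompEqX, ← comp_eq_aeval] using key
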